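/- Let p be a pmf on ℕ with finite mean, and let S₁, S₂ be i.i.d. with pmf p. Define G : [0,∞) → ℝ by G(c) = sup{ H(law of (X−S₁)₊ + S₂) : X an ℕ-valued random variable independent of (S₁,S₂) with E[(X−S₁)₊] ≤ c }. Then G is real-valued (finite), nonnegative, nondecreasing, and concave on [0,∞). -/

import Mathlib

open scoped BigOperators

/-- Shannon entropy (natural log) of a pmf on ℕ. -/
noncomputable def Hent (p : ℕ → ℝ) : ℝ := ∑' n, -(p n * Real.log (p n))

/-- `p` is a probability mass function on ℕ. -/
def IsPmf (p : ℕ → ℝ) : Prop := (∀ n, 0 ≤ p n) ∧ (∑' n, p n) = 1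

/-- pmf of `W + S` for independent `W ~ w`, `S ~ p`. -/
noncomputable def convPmf (w p : ℕ → ℝ) : ℕ → ℝ :=
  fun n => ∑ j ∈ Finset.range (n + 1), w j * p (n - j)

/-- pmf of `(S - τ)₊` for `S ~ p` (truncated subtraction on ℕ). -/
noncomputable def truncSubPmf (p : ℕ → ℝ) (τ : ℕ) : ℕ → ℝ :=
  fun n => ∑' i, if i - τ = n then p i else 0

/-- pmf of `(X - T)₊` for independent `X ~ x`, `T ~ q`. -/
noncomputable def subPairPmf (x q : ℕ → ℝ) : ℕ → ℝ :=
  fun n => ∑' i, ∑' j, if i - j = n then x i * q j else 0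

/-- `w` has (well-defined) mean at most `c`. -/
def MeanLe (w : ℕ → ℝ) (c : ℝ) : Prop :=
  Summable (fun n : ℕ => (n : ℝ) * w n) ∧ (∑' n : ℕ, (n : ℝ) * w n) ≤ c

/-- Output entropies `H((X - (S₁ - τ)₊)₊ + S₂)` over admissible laws of `X`
(independent of `(S₁, S₂)`, with `E[(X - (S₁ - τ)₊)₊] ≤ c`);
this is the generalized-feedback maximum output entropy problem. -/
def genFB (p : ℕ → ℝ) (τ : ℕ) (c : ℝ) : Set ℝ :=
  {h | ∃ x : ℕ → ℝ, IsPmf x ∧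
    MeanLe (subPairPmf x (truncSubPmf p τ)) c ∧
    h = Hent (convPmf (subPairPmf x (truncSubPmf p τ)) p)}

/-- Output entropies `H(W + S)` over admissible laws of `W` (independent of `S`,
nonnegative, with `E[W] ≤ c`); this is the full-feedback maximum output entropy problem. -/
def fullFB (p : ℕ → ℝ) (c : ℝ) : Set ℝ :=
  {h | ∃ w : ℕ → ℝ, IsPmf w ∧ MeanLe w c ∧ h = Hent (convPmf w p)}

/-- Output entropies `H((X - S₁)₊ + S₂)` over admissible laws of `X` (independent of
`(S₁, S₂)` which are i.i.d. `p`, with `E[(X - S₁)₊] ≤ c`); the weak-feedback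
maximum output entropy problem. -/
def weakFB (p : ℕ → ℝ) (c : ℝ) : Set ℝ :=
  {h | ∃ x : ℕ → ℝ, IsPmf x ∧ MeanLe (subPairPmf x p) c ∧
    h = Hent (convPmf (subPairPmf x p) p)}

/-! ### Auxiliary lemmas -/

lemma isPmf_summable {p : ℕ → ℝ} (hp : IsPmf p) : Summable p := by
  by_contra h
  have h2 := hp.2
  rw [tsum_eq_zero_of_not_summable h] at h2
  exact one_ne_zero h2.symm

lemma inner_nonneg {x p : ℕ → ℝ} (hx : ∀ n, 0 ≤ x n) (hp : ∀ n, 0 ≤ p n) (i n : ℕ) :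
    ∀ j, 0 ≤ (if i - j = n then x i * p j else 0) := by
  intro j
  by_cases h : i - j = n <;> simp [h, mul_nonneg (hx i) (hp j)]

lemma inner_summable {x p : ℕ → ℝ} (hx : ∀ n, 0 ≤ x n) (hp : IsPmf p) (i n : ℕ) :
    Summable (fun j => if i - j = n then x i * p j else 0) := by
  refine Summable.of_nonneg_of_le (inner_nonneg hx hp.1 i n) (fun j => ?_)
    ((isPmf_summable hp).mul_left (x i))
  split_ifs
  · exact le_rfl
  · exact mul_nonneg (hx i) (hp.1 j)

lemma inner_tsum_nonneg {x p : ℕ → ℝ} (hx : ∀ n, 0 ≤ x n) (hp : ∀ n, 0 ≤ p n) (i n : ℕ) :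
    0 ≤ ∑' j, if i - j = n then x i * p j else 0 :=
  tsum_nonneg (inner_nonneg hx hp i n)

lemma inner_tsum_le {x p : ℕ → ℝ} (hx : ∀ n, 0 ≤ x n) (hp : IsPmf p) (i n : ℕ) :
    (∑' j, if i - j = n then x i * p j else 0) ≤ x i := by
  have h := Summable.tsum_le_tsum (f := fun j => if i - j = n then x i * p j else 0)
    (g := fun j => x i * p j) (fun j => ?_) (inner_summable hx hp i n)
    ((isPmf_summable hp).mul_left (x i))
  · rwa [tsum_mul_left, hp.2, mul_one] at h
  · split_ifs
    · exact le_rfl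
    · exact mul_nonneg (hx i) (hp.1 j)

lemma outer_summable {x p : ℕ → ℝ} (hx : IsPmf x) (hp : IsPmf p) (n : ℕ) :
    Summable (fun i => ∑' j, if i - j = n then x i * p j else 0) :=
  Summable.of_nonneg_of_le (fun i => inner_tsum_nonneg hx.1 hp.1 i n)
    (fun i => inner_tsum_le hx.1 hp i n) (isPmf_summable hx)

lemma subPairPmf_nonneg {x p : ℕ → ℝ} (hx : ∀ n, 0 ≤ x n) (hp : ∀ n, 0 ≤ p n) (n : ℕ) :
    0 ≤ subPairPmf x p n :=
  tsum_nonneg fun i => inner_tsum_nonneg hx hp i n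

lemma ofReal_tsum_eq_one {q : ℕ → ℝ} (hq : IsPmf q) :
    ∑' n, ENNReal.ofReal (q n) = 1 := by
  rw [← ENNReal.ofReal_tsum_of_nonneg hq.1 (isPmf_summable hq), hq.2, ENNReal.ofReal_one]

lemma subPairPmf_ofReal {x p : ℕ → ℝ} (hx : IsPmf x) (hp : IsPmf p) (n : ℕ) :
    ENNReal.ofReal (subPairPmf x p n)
      = ∑' i, ∑' j, (if i - j = n then ENNReal.ofReal (x i) * ENNReal.ofReal (p j) else 0) := by
  rw [subPairPmf, ENNReal.ofReal_tsum_of_nonneg (fun i => inner_tsum_nonneg hx.1 hp.1 i n)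
    (outer_summable hx hp n)]
  refine tsum_congr fun i => ?_
  rw [ENNReal.ofReal_tsum_of_nonneg (inner_nonneg hx.1 hp.1 i n) (inner_summable hx.1 hp i n)]
  refine tsum_congr fun j => ?_
  by_cases h : i - j = n
  · simp [h, ENNReal.ofReal_mul (hx.1 i)]
  · simp [h]

lemma subPairPmf_isPmf {x p : ℕ → ℝ} (hx : IsPmf x) (hp : IsPmf p) :
    IsPmf (subPairPmf x p) := by
  have key : ∑' n, ENNReal.ofReal (subPairPmf x p n) = 1 := by
    have h1 : ∑' n, ENNReal.ofReal (subPairPmf x p n)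
        = ∑' (i : ℕ) (j : ℕ) (n : ℕ),
            (if i - j = n then ENNReal.ofReal (x i) * ENNReal.ofReal (p j) else 0) := by
      rw [tsum_congr (subPairPmf_ofReal hx hp), ENNReal.tsum_comm]
      exact tsum_congr fun i => ENNReal.tsum_comm
    rw [h1]
    have h2 : ∀ i j : ℕ, ∑' n : ℕ,
        (if i - j = n then ENNReal.ofReal (x i) * ENNReal.ofReal (p j) else 0)
          = ENNReal.ofReal (x i) * ENNReal.ofReal (p j) := by
      intro i j
      rw [tsum_eq_single (i - j) (fun b hb => if_neg (fun h => hb (h.symm)))]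
      exact if_pos rfl
    calc ∑' (i : ℕ) (j : ℕ) (n : ℕ),
          (if i - j = n then ENNReal.ofReal (x i) * ENNReal.ofReal (p j) else 0)
        = ∑' (i : ℕ) (j : ℕ), ENNReal.ofReal (x i) * ENNReal.ofReal (p j) := by
          exact tsum_congr fun i => tsum_congr fun j => h2 i j
      _ = (∑' i, ENNReal.ofReal (x i)) * ∑' j, ENNReal.ofReal (p j) := by
          rw [← ENNReal.tsum_mul_right]
          exact tsum_congr fun i => (ENNReal.tsum_mul_left).symm ▸ rfl
      _ = 1 := by rw [ofReal_tsum_eq_one hx, ofReal_tsum_eq_one hp, one_mul]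
  have hne : ∑' n, ENNReal.ofReal (subPairPmf x p n) ≠ ⊤ := by rw [key]; exact ENNReal.one_ne_top
  have hsum : Summable (subPairPmf x p) := by
    have := ENNReal.summable_toReal hne
    refine this.congr fun n => ?_
    exact ENNReal.toReal_ofReal (subPairPmf_nonneg hx.1 hp.1 n)
  refine ⟨subPairPmf_nonneg hx.1 hp.1, ?_⟩
  have : (∑' n, ENNReal.ofReal (subPairPmf x p n)).toReal = ∑' n, subPairPmf x p n := by
    rw [ENNReal.tsum_toReal_eq (fun n => ENNReal.ofReal_ne_top)]
    exact tsum_congr fun n => ENNReal.toReal_ofReal (subPairPmf_nonneg hx.1 hp.1 n)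
  rw [← this, key, ENNReal.toReal_one]

lemma norm_eq_self_of_nonneg {a : ℕ → ℝ} (ha : ∀ n, 0 ≤ a n) :
    (fun n => ‖a n‖) = a := funext fun n => abs_of_nonneg (ha n)

lemma convPmf_nonneg {w p : ℕ → ℝ} (hw : ∀ n, 0 ≤ w n) (hp : ∀ n, 0 ≤ p n) (n : ℕ) :
    0 ≤ convPmf w p n :=
  Finset.sum_nonneg fun j _ => mul_nonneg (hw j) (hp (n - j))

lemma convPmf_summable {w p : ℕ → ℝ} (hw : ∀ n, 0 ≤ w n) (hp : ∀ n, 0 ≤ p n)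
    (hws : Summable w) (hps : Summable p) : Summable (convPmf w p) := by
  have := summable_sum_mul_range_of_summable_norm'
    (f := w) (g := p) (by rw [norm_eq_self_of_nonneg hw]; exact hws) hws
    (by rw [norm_eq_self_of_nonneg hp]; exact hps) hps
  exact this

lemma convPmf_tsum {w p : ℕ → ℝ} (hw : ∀ n, 0 ≤ w n) (hp : ∀ n, 0 ≤ p n)
    (hws : Summable w) (hps : Summable p) :
    ∑' n, convPmf w p n = (∑' n, w n) * ∑' n, p n := by
  exact (tsum_mul_tsum_eq_tsum_sum_range_of_summable_norm'
    (by rw [norm_eq_self_of_nonneg hw]; exact hws) hws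
    (by rw [norm_eq_self_of_nonneg hp]; exact hps) hps).symm

lemma convPmf_mul_nat {w p : ℕ → ℝ} (n : ℕ) :
    (n : ℝ) * convPmf w p n
      = convPmf (fun k => (k : ℝ) * w k) p n + convPmf w (fun k => (k : ℝ) * p k) n := by
  simp only [convPmf, Finset.mul_sum, ← Finset.sum_add_distrib]
  refine Finset.sum_congr rfl fun k hk => ?_
  have hk' : k ≤ n := Nat.lt_succ_iff.mp (Finset.mem_range.mp hk)
  have : ((n - k : ℕ) : ℝ) = (n : ℝ) - (k : ℝ) := by
    rw [Nat.cast_sub hk']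
  rw [this]; ring

lemma convPmf_mean {w p : ℕ → ℝ} (hw : ∀ n, 0 ≤ w n) (hp : ∀ n, 0 ≤ p n)
    (hws : Summable w) (hps : Summable p)
    (hwm : Summable fun n : ℕ => (n : ℝ) * w n) (hpm : Summable fun n : ℕ => (n : ℝ) * p n) :
    Summable (fun n : ℕ => (n : ℝ) * convPmf w p n) ∧
    ∑' n : ℕ, (n : ℝ) * convPmf w p n
      = (∑' n : ℕ, (n : ℝ) * w n) * (∑' n, p n) + (∑' n, w n) * ∑' n : ℕ, (n : ℝ) * p n := by
  have hw' : ∀ n : ℕ, 0 ≤ (n : ℝ) * w n := fun n => mul_nonneg (Nat.cast_nonneg n) (hw n)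
  have hp' : ∀ n : ℕ, 0 ≤ (n : ℝ) * p n := fun n => mul_nonneg (Nat.cast_nonneg n) (hp n)
  have s1 : Summable (convPmf (fun k => (k : ℝ) * w k) p) := convPmf_summable hw' hp hwm hps
  have s2 : Summable (convPmf w (fun k => (k : ℝ) * p k)) := convPmf_summable hw hp' hws hpm
  constructor
  · refine (s1.add s2).congr fun n => ?_
    exact (convPmf_mul_nat n).symm
  · calc ∑' n : ℕ, (n : ℝ) * convPmf w p n
        = ∑' n, (convPmf (fun k => (k : ℝ) * w k) p n + convPmf w (fun k => (k : ℝ) * p k) n) :=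
          tsum_congr fun n => convPmf_mul_nat n
      _ = (∑' n, convPmf (fun k => (k : ℝ) * w k) p n)
            + ∑' n, convPmf w (fun k => (k : ℝ) * p k) n := Summable.tsum_add s1 s2
      _ = _ := by
          rw [convPmf_tsum hw' hp hwm hps, convPmf_tsum hw hp' hws hpm]

lemma convPmf_isPmf {w p : ℕ → ℝ} (hw : IsPmf w) (hp : IsPmf p) : IsPmf (convPmf w p) :=
  ⟨convPmf_nonneg hw.1 hp.1, by
    rw [convPmf_tsum hw.1 hp.1 (isPmf_summable hw) (isPmf_summable hp), hw.2, hp.2, one_mul]⟩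

lemma ref_tsum : ∑' n : ℕ, (2:ℝ)⁻¹ ^ (n+1) = 1 := by
  have h : ∀ n : ℕ, (2:ℝ)⁻¹ ^ (n+1) = (2:ℝ)⁻¹ ^ n * 2⁻¹ := fun n => pow_succ _ _
  rw [tsum_congr h, tsum_mul_right, tsum_geometric_of_lt_one (by norm_num) (by norm_num)]
  norm_num

lemma ref_summable : Summable (fun n : ℕ => (2:ℝ)⁻¹ ^ (n+1)) := by
  have := (summable_geometric_of_lt_one (r := (2:ℝ)⁻¹) (by norm_num) (by norm_num)).mul_right 2⁻¹
  exact this.congr fun n => (pow_succ _ _).symm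

lemma hent_term_nonneg {q : ℕ → ℝ} (h0 : ∀ n, 0 ≤ q n) (hs : Summable q)
    (h1 : ∑' n, q n = 1) (n : ℕ) : 0 ≤ -(q n * Real.log (q n)) := by
  have hle : q n ≤ 1 := by
    have := Summable.le_tsum hs n (fun j _ => h0 j)
    rwa [h1] at this
  have := Real.negMulLog_nonneg (h0 n) hle
  simpa [Real.negMulLog, neg_mul] using this

lemma hent_nonneg {q : ℕ → ℝ} (h0 : ∀ n, 0 ≤ q n) (hs : Summable q)
    (h1 : ∑' n, q n = 1) : 0 ≤ Hent q :=
  tsum_nonneg (hent_term_nonneg h0 hs h1)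

lemma hent_aux {q : ℕ → ℝ} (h0 : ∀ n, 0 ≤ q n) (hs : Summable q) (h1 : ∑' n, q n = 1)
    (hm : Summable fun n : ℕ => (n : ℝ) * q n) :
    Summable (fun n => -(q n * Real.log (q n))) ∧
    Hent q ≤ Real.log 2 * (1 + ∑' n : ℕ, (n : ℝ) * q n) := by
  set r : ℕ → ℝ := fun n => (2:ℝ)⁻¹ ^ (n+1) with hr
  have hrpos : ∀ n, 0 < r n := fun n => pow_pos (by norm_num) _
  have hlr : ∀ n : ℕ, Real.log (r n) = -(((n : ℝ) + 1) * Real.log 2) := by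
    intro n
    rw [hr]
    simp only [Real.log_pow, Real.log_inv]
    push_cast; ring
  have f_le : ∀ n, -(q n * Real.log (q n))
      ≤ (r n - q n) + ((n : ℝ) * q n + q n) * Real.log 2 := by
    intro n
    rcases eq_or_lt_of_le (h0 n) with hq | hq
    · rw [← hq]
      simp only [mul_zero, zero_mul, neg_zero, sub_zero, add_zero, zero_add, mul_comm]
      simpa using (hrpos n).le
    · have hl := Real.log_le_sub_one_of_pos (div_pos (hrpos n) hq)
      have e1 : q n * Real.log (r n / q n) ≤ r n - q n := by
        have h2 := mul_le_mul_of_nonneg_left hl hq.le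
        have h3 : q n * (r n / q n - 1) = r n - q n := by
          field_simp
        linarith [h2, h3.le, h3.ge]
      rw [Real.log_div (ne_of_gt (hrpos n)) (ne_of_gt hq), hlr n] at e1
      nlinarith [e1]
  have f_nonneg := hent_term_nonneg h0 hs h1
  have g_summable : Summable (fun n : ℕ =>
      (r n - q n) + ((n : ℝ) * q n + q n) * Real.log 2) :=
    Summable.add (ref_summable.sub hs) ((hm.add hs).mul_right _)
  have f_summable : Summable (fun n => -(q n * Real.log (q n))) :=
    Summable.of_nonneg_of_le f_nonneg f_le g_summable
  refine ⟨f_summable, ?_⟩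
  have hle := Summable.tsum_le_tsum f_le f_summable g_summable
  have hgt : ∑' n : ℕ, ((r n - q n) + ((n : ℝ) * q n + q n) * Real.log 2)
      = Real.log 2 * (1 + ∑' n : ℕ, (n : ℝ) * q n) := by
    rw [Summable.tsum_add (ref_summable.sub hs) ((hm.add hs).mul_right _),
      Summable.tsum_sub ref_summable hs, tsum_mul_right, Summable.tsum_add hm hs, ref_tsum, h1]
    ring
  rw [Hent]
  calc ∑' n, -(q n * Real.log (q n))
      ≤ ∑' n : ℕ, ((r n - q n) + ((n : ℝ) * q n + q n) * Real.log 2) := hle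
    _ = _ := hgt

lemma weakFB_elem_bound {p : ℕ → ℝ} (hp : IsPmf p)
    (hmean : Summable fun n : ℕ => (n : ℝ) * p n) {c h : ℝ} (hh : h ∈ weakFB p c) :
    0 ≤ h ∧ h ≤ Real.log 2 * (1 + (c + ∑' n : ℕ, (n : ℝ) * p n)) := by
  obtain ⟨x, hx, hml, rfl⟩ := hh
  have hw := subPairPmf_isPmf hx hp
  have hq := convPmf_isPmf hw hp
  have hqs := isPmf_summable hq
  have hmc := convPmf_mean hw.1 hp.1 (isPmf_summable hw) (isPmf_summable hp) hml.1 hmean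
  refine ⟨hent_nonneg hq.1 hqs hq.2, ?_⟩
  refine (hent_aux hq.1 hqs hq.2 hmc.1).2.trans ?_
  have hL : 0 ≤ Real.log 2 := Real.log_nonneg one_le_two
  have hmle : ∑' n : ℕ, (n : ℝ) * convPmf (subPairPmf x p) p n
      ≤ c + ∑' n : ℕ, (n : ℝ) * p n := by
    rw [hmc.2, hw.2, hp.2, mul_one, one_mul]
    have := hml.2
    linarith
  exact mul_le_mul_of_nonneg_left (by linarith) hL

lemma weakFB_bddAbove {p : ℕ → ℝ} (hp : IsPmf p)
    (hmean : Summable fun n : ℕ => (n : ℝ) * p n) (c : ℝ) : BddAbove (weakFB p c) :=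
  ⟨Real.log 2 * (1 + (c + ∑' n : ℕ, (n : ℝ) * p n)),
    fun _ hh => (weakFB_elem_bound hp hmean hh).2⟩

lemma delta0_isPmf : IsPmf (fun n : ℕ => if n = 0 then (1:ℝ) else 0) := by
  constructor
  · intro n; by_cases hn : n = 0 <;> simp [hn]
  · rw [tsum_eq_single 0 (fun b hb => if_neg hb)]; simp

lemma meanLe_delta0 {c : ℝ} (hc : 0 ≤ c) :
    MeanLe (fun n : ℕ => if n = 0 then (1:ℝ) else 0) c := by
  have h0 : (fun n : ℕ => (n : ℝ) * if n = 0 then (1:ℝ) else 0) = fun _ => 0 := by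
    funext n; by_cases hn : n = 0 <;> simp [hn]
  constructor
  · rw [h0]; exact summable_zero
  · rw [h0]; simpa using hc

lemma subPairPmf_delta0 {p : ℕ → ℝ} (hp : IsPmf p) :
    subPairPmf (fun n : ℕ => if n = 0 then (1:ℝ) else 0) p
      = fun n : ℕ => if n = 0 then (1:ℝ) else 0 := by
  funext n
  rw [subPairPmf, tsum_eq_single 0 ?_]
  · by_cases hn : n = 0
    · subst hn
      simp only [Nat.zero_sub, if_pos rfl, one_mul]
      simpa using hp.2
    · simp [Nat.zero_sub, Ne.symm hn, hn]
  · intro i hi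
    simp [hi]

lemma weakFB_nonempty {p : ℕ → ℝ} (hp : IsPmf p) {c : ℝ} (hc : 0 ≤ c) :
    (weakFB p c).Nonempty := by
  refine ⟨Hent (convPmf (subPairPmf (fun n : ℕ => if n = 0 then (1:ℝ) else 0) p) p),
    ⟨fun n : ℕ => if n = 0 then (1:ℝ) else 0, delta0_isPmf, ?_, rfl⟩⟩
  rw [subPairPmf_delta0 hp]
  exact meanLe_delta0 hc

lemma weakFB_mono {p : ℕ → ℝ} {c d : ℝ} (hcd : c ≤ d) : weakFB p c ⊆ weakFB p d := by
  rintro h ⟨x, hx, hml, rfl⟩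
  exact ⟨x, hx, ⟨hml.1, hml.2.trans hcd⟩, rfl⟩

lemma mix_isPmf {x₁ x₂ : ℕ → ℝ} (hx₁ : IsPmf x₁) (hx₂ : IsPmf x₂) {a b : ℝ}
    (ha : 0 ≤ a) (hb : 0 ≤ b) (hab : a + b = 1) :
    IsPmf (fun n => a * x₁ n + b * x₂ n) := by
  constructor
  · intro n
    exact add_nonneg (mul_nonneg ha (hx₁.1 n)) (mul_nonneg hb (hx₂.1 n))
  · rw [Summable.tsum_add ((isPmf_summable hx₁).mul_left a) ((isPmf_summable hx₂).mul_left b),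
      tsum_mul_left, tsum_mul_left, hx₁.2, hx₂.2]
    linarith

lemma subPairPmf_linear {x₁ x₂ p : ℕ → ℝ} (hx₁ : IsPmf x₁) (hx₂ : IsPmf x₂) (hp : IsPmf p)
    (a b : ℝ) :
    subPairPmf (fun n => a * x₁ n + b * x₂ n) p
      = fun n => a * subPairPmf x₁ p n + b * subPairPmf x₂ p n := by
  funext n
  rw [subPairPmf]
  have hterm : ∀ i j : ℕ, (if i - j = n then (a * x₁ i + b * x₂ i) * p j else 0)
      = a * (if i - j = n then x₁ i * p j else 0) + b * (if i - j = n then x₂ i * p j else 0) := by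
    intro i j; split_ifs <;> ring
  have hin : ∀ i, (∑' j, if i - j = n then (fun m => a * x₁ m + b * x₂ m) i * p j else 0)
      = a * (∑' j, if i - j = n then x₁ i * p j else 0)
        + b * (∑' j, if i - j = n then x₂ i * p j else 0) := by
    intro i
    rw [tsum_congr (fun j => hterm i j), Summable.tsum_add ((inner_summable hx₁.1 hp i n).mul_left a)
      ((inner_summable hx₂.1 hp i n).mul_left b), tsum_mul_left, tsum_mul_left]
  rw [tsum_congr hin, Summable.tsum_add ((outer_summable hx₁ hp n).mul_left a)
    ((outer_summable hx₂ hp n).mul_left b), tsum_mul_left, tsum_mul_left]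
  rfl

lemma convPmf_linear (w₁ w₂ p : ℕ → ℝ) (a b : ℝ) :
    convPmf (fun n => a * w₁ n + b * w₂ n) p
      = fun n => a * convPmf w₁ p n + b * convPmf w₂ p n := by
  funext n
  simp only [convPmf, add_mul, Finset.sum_add_distrib, Finset.mul_sum, mul_assoc]

lemma hent_mix {u v : ℕ → ℝ} (hu0 : ∀ n, 0 ≤ u n) (hv0 : ∀ n, 0 ≤ v n)
    {a b : ℝ} (ha : 0 ≤ a) (hb : 0 ≤ b) (hab : a + b = 1)
    (hsu : Summable fun n => -(u n * Real.log (u n)))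
    (hsv : Summable fun n => -(v n * Real.log (v n)))
    (hsm : Summable fun n => -((a * u n + b * v n) * Real.log (a * u n + b * v n))) :
    a * Hent u + b * Hent v ≤ Hent (fun n => a * u n + b * v n) := by
  have hpt : ∀ n, a * (-(u n * Real.log (u n))) + b * (-(v n * Real.log (v n)))
      ≤ -((a * u n + b * v n) * Real.log (a * u n + b * v n)) := by
    intro n
    have := Real.concaveOn_negMulLog.2 (Set.mem_Ici.mpr (hu0 n)) (Set.mem_Ici.mpr (hv0 n))
      ha hb hab
    simpa only [smul_eq_mul, Real.negMulLog, neg_mul, mul_neg] using this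
  have hmin : Summable (fun n => a * (-(u n * Real.log (u n)))
      + b * (-(v n * Real.log (v n)))) := (hsu.mul_left a).add (hsv.mul_left b)
  have := Summable.tsum_le_tsum hpt hmin hsm
  rw [Summable.tsum_add (hsu.mul_left a) (hsv.mul_left b), tsum_mul_left, tsum_mul_left] at this
  exact this


/-- `G c = sup { H((X - S₁)₊ + S₂) : X ⫫ (S₁,S₂), E[(X - S₁)₊] ≤ c }`
is finite (the sup is of a nonempty, bounded-above set), nonnegative, nondecreasing,
and concave on `[0, ∞)`. -/
theorem weakFB_entropy_concave (p : ℕ → ℝ) (hp : IsPmf p)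
    (hmean : Summable (fun n : ℕ => (n : ℝ) * p n))
    (G : ℝ → ℝ) (hG : ∀ c : ℝ, G c = sSup (weakFB p c)) :
    (∀ c ∈ Set.Ici (0 : ℝ), (weakFB p c).Nonempty ∧ BddAbove (weakFB p c) ∧ 0 ≤ G c)
      ∧ MonotoneOn G (Set.Ici (0 : ℝ))
      ∧ ConcaveOn ℝ (Set.Ici (0 : ℝ)) G := by
  have hB : ∀ c : ℝ, BddAbove (weakFB p c) := weakFB_bddAbove hp hmean
  have hNE : ∀ c : ℝ, 0 ≤ c → (weakFB p c).Nonempty := fun c hc => weakFB_nonempty hp hc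
  have hGnn : ∀ c : ℝ, 0 ≤ c → 0 ≤ G c := by
    intro c hc
    obtain ⟨h, hh⟩ := hNE c hc
    rw [hG c]
    exact le_trans (weakFB_elem_bound hp hmean hh).1 (le_csSup (hB c) hh)
  refine ⟨fun c hc => ⟨hNE c (Set.mem_Ici.mp hc), hB c, hGnn c (Set.mem_Ici.mp hc)⟩, ?_, ?_⟩
  · intro c hc d _ hcd
    rw [hG c, hG d]
    exact csSup_le_csSup (hB d) (hNE c (Set.mem_Ici.mp hc)) (weakFB_mono hcd)
  · refine ⟨convex_Ici 0, ?_⟩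
    intro c hc d hd a b ha hb hab
    simp only [smul_eq_mul]
    rcases eq_or_lt_of_le ha with ha0 | ha0
    · rw [← ha0] at hab ⊢
      rw [show b = 1 by linarith]
      simp
    rcases eq_or_lt_of_le hb with hb0 | hb0
    · rw [← hb0] at hab ⊢
      rw [show a = 1 by linarith]
      simp
    have hc' : 0 ≤ c := Set.mem_Ici.mp hc
    have hd' : 0 ≤ d := Set.mem_Ici.mp hd
    have hce : 0 ≤ a * c + b * d := add_nonneg (mul_nonneg ha hc') (mul_nonneg hb hd')
    have key : ∀ h₁ ∈ weakFB p c, ∀ h₂ ∈ weakFB p d,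
        a * h₁ + b * h₂ ≤ G (a * c + b * d) := by
      rintro h₁ ⟨x₁, hx₁, hm₁, rfl⟩ h₂ ⟨x₂, hx₂, hm₂, rfl⟩
      have hxp : IsPmf (fun n => a * x₁ n + b * x₂ n) := mix_isPmf hx₁ hx₂ ha hb hab
      have hlin := subPairPmf_linear hx₁ hx₂ hp a b
      have hw₁ := subPairPmf_isPmf hx₁ hp
      have hw₂ := subPairPmf_isPmf hx₂ hp
      have hwm : MeanLe (subPairPmf (fun n => a * x₁ n + b * x₂ n) p) (a * c + b * d) := by
        rw [hlin]
        constructor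
        · refine ((hm₁.1.mul_left a).add (hm₂.1.mul_left b)).congr fun n => ?_
          dsimp only; ring
        · have hrw : (fun n : ℕ => (n : ℝ) * (a * subPairPmf x₁ p n + b * subPairPmf x₂ p n))
              = fun n : ℕ => a * ((n : ℝ) * subPairPmf x₁ p n)
                + b * ((n : ℝ) * subPairPmf x₂ p n) := by
            funext n; ring
          rw [hrw, Summable.tsum_add (hm₁.1.mul_left a) (hm₂.1.mul_left b), tsum_mul_left, tsum_mul_left]
          have h1 := hm₁.2
          have h2 := hm₂.2
          nlinarith [h1, h2]
      have hconv : convPmf (subPairPmf (fun n => a * x₁ n + b * x₂ n) p) p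
          = fun n => a * convPmf (subPairPmf x₁ p) p n + b * convPmf (subPairPmf x₂ p) p n := by
        rw [hlin, convPmf_linear]
      have mem : Hent (convPmf (subPairPmf (fun n => a * x₁ n + b * x₂ n) p) p)
          ∈ weakFB p (a * c + b * d) := ⟨_, hxp, hwm, rfl⟩
      have hq₁ := convPmf_isPmf hw₁ hp
      have hq₂ := convPmf_isPmf hw₂ hp
      have hs₁ := (hent_aux hq₁.1 (isPmf_summable hq₁) hq₁.2
        (convPmf_mean hw₁.1 hp.1 (isPmf_summable hw₁) (isPmf_summable hp) hm₁.1 hmean).1).1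
      have hs₂ := (hent_aux hq₂.1 (isPmf_summable hq₂) hq₂.2
        (convPmf_mean hw₂.1 hp.1 (isPmf_summable hw₂) (isPmf_summable hp) hm₂.1 hmean).1).1
      have hwmix := subPairPmf_isPmf hxp hp
      have hqmix := convPmf_isPmf hwmix hp
      have hsmix := (hent_aux hqmix.1 (isPmf_summable hqmix) hqmix.2
        (convPmf_mean hwmix.1 hp.1 (isPmf_summable hwmix) (isPmf_summable hp)
          hwm.1 hmean).1).1
      have hsm : Summable fun n =>
          -((a * convPmf (subPairPmf x₁ p) p n + b * convPmf (subPairPmf x₂ p) p n)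
            * Real.log (a * convPmf (subPairPmf x₁ p) p n
              + b * convPmf (subPairPmf x₂ p) p n)) := by
        refine hsmix.congr fun n => ?_
        rw [hconv]
      have hmixle := hent_mix hq₁.1 hq₂.1 ha hb hab hs₁ hs₂ hsm
      calc a * Hent (convPmf (subPairPmf x₁ p) p) + b * Hent (convPmf (subPairPmf x₂ p) p)
          ≤ Hent (fun n => a * convPmf (subPairPmf x₁ p) p n
              + b * convPmf (subPairPmf x₂ p) p n) := hmixle
        _ = Hent (convPmf (subPairPmf (fun n => a * x₁ n + b * x₂ n) p) p) := by rw [hconv]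
        _ ≤ G (a * c + b * d) := by
            rw [hG (a * c + b * d)]
            exact le_csSup (hB _) mem
    have step1 : ∀ h₂ ∈ weakFB p d, a * G c + b * h₂ ≤ G (a * c + b * d) := by
      intro h₂ hh₂
      have hsc : sSup (weakFB p c) ≤ (G (a * c + b * d) - b * h₂) / a := by
        refine csSup_le (hNE c hc') fun h₁ hh₁ => ?_
        rw [le_div_iff₀ ha0]
        have := key h₁ hh₁ h₂ hh₂
        linarith
      rw [hG c]
      have := (le_div_iff₀ ha0).mp hsc
      linarith
    have hsd : sSup (weakFB p d) ≤ (G (a * c + b * d) - a * G c) / b := by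
      refine csSup_le (hNE d hd') fun h₂ hh₂ => ?_
      rw [le_div_iff₀ hb0]
      have := step1 h₂ hh₂
      linarith
    rw [hG d]
    have := (le_div_iff₀ hb0).mp hsd
    linarith
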